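/- Given a flow f with excess e_f(v_o) > 0 at v_o, deficit at v_c, zero excess elsewhere, and no negative-cost cycle in G_f, if there is no directed path from v_o to v_c in the residual network G_f, then the original transshipment problem has no feasible solution. -/

import Mathlib

open Finset

/-- A flow network: directed arcs with costs, capacities (possibly infinite),
lower bounds and vertex balances. -/
structure Network (V E : Type) where
  src : E → V
  dst : E → V
  cost : E → ℝ
  cap : E → WithTop ℝ
  low : E → ℝ
  bal : V → ℝ

variable {V E : Type}

def outflow [Fintype E] [DecidableEq V] (N : Network V E) (f : E → ℝ) (v : V) : ℝ :=
  ∑ e, if N.src e = v then f e else 0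

def inflow [Fintype E] [DecidableEq V] (N : Network V E) (f : E → ℝ) (v : V) : ℝ :=
  ∑ e, if N.dst e = v then f e else 0

/-- `f` obeys lower bounds and capacities. -/
def RespectsCap (N : Network V E) (f : E → ℝ) : Prop :=
  ∀ e, N.low e ≤ f e ∧ (f e : WithTop ℝ) ≤ N.cap e

/-- Feasible flow: capacity constraints and balance constraints. -/
def Feasible [Fintype E] [DecidableEq V] (N : Network V E) (f : E → ℝ) : Prop :=
  RespectsCap N f ∧ ∀ v, outflow N f v - inflow N f v = N.bal v

def flowCost [Fintype E] (N : Network V E) (f : E → ℝ) : ℝ := ∑ e, N.cost e * f e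

/-- Excess of a vertex: `b(v) + inflow - outflow`. -/
def excess [Fintype E] [DecidableEq V] (N : Network V E) (f : E → ℝ) (v : V) : ℝ :=
  N.bal v + inflow N f v - outflow N f v

/-- Residual steps: `Sum.inl e` is the forward residual arc of `e`,
`Sum.inr e` the backward (reverse) residual arc. -/
def stepTail (N : Network V E) : E ⊕ E → V := Sum.elim N.src N.dst
def stepHead (N : Network V E) : E ⊕ E → V := Sum.elim N.dst N.src
def stepCost (N : Network V E) : E ⊕ E → ℝ := Sum.elim N.cost (fun e => -N.cost e)

/-- A residual step is present in the residual network `G_f`. -/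
def StepOk (N : Network V E) (f : E → ℝ) : E ⊕ E → Prop :=
  Sum.elim (fun e => (f e : WithTop ℝ) < N.cap e) (fun e => N.low e < f e)

def listCost (N : Network V E) (L : List (E ⊕ E)) : ℝ := (L.map (stepCost N)).sum

/-- A (closed) directed cycle in the residual network `G_f`. -/
def IsResidCycle (N : Network V E) (f : E → ℝ) (L : List (E ⊕ E)) : Prop :=
  L ≠ [] ∧ (∀ d ∈ L, StepOk N f d) ∧
  L.Chain' (fun a b => stepHead N a = stepTail N b) ∧
  L.getLast?.map (stepHead N) = L.head?.map (stepTail N)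

/-- The residual network contains no negative-cost cycle. -/
def NoNegCycle (N : Network V E) (f : E → ℝ) : Prop :=
  ∀ L, IsResidCycle N f L → 0 ≤ listCost N L

/-- A directed path from `s` to `t` in the residual network `G_f`. -/
def IsResidPath (N : Network V E) (f : E → ℝ) (s t : V) (L : List (E ⊕ E)) : Prop :=
  (∀ d ∈ L, StepOk N f d) ∧
  L.Chain' (fun a b => stepHead N a = stepTail N b) ∧
  L.head?.map (stepTail N) = some s ∧ L.getLast?.map (stepHead N) = some t

/-- If `f` has positive excess at `v_o`, a deficit at `v_c`, zero excess
elsewhere, no negative-cost residual cycle, and there is no directed residual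
path from `v_o` to `v_c`, then the transshipment problem is infeasible. -/
theorem stmt19 {V E : Type} [Fintype V] [Fintype E] [DecidableEq V]
    (N : Network V E) (f : E → ℝ) (vo vc : V) (hne : vo ≠ vc)
    (hcap : RespectsCap N f)
    (hnn : NoNegCycle N f)
    (ho : 0 < excess N f vo) (hc : excess N f vc < 0)
    (hrest : ∀ v, v ≠ vo → v ≠ vc → excess N f v = 0)
    (hnopath : ¬ ∃ L, IsResidPath N f vo vc L) :
    ¬ ∃ g : E → ℝ, Feasible N g := by
  classical
  rintro ⟨g, hgcap, hgbal⟩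
  -- The set of vertices reachable from vo in the residual network
  set Reach : V → Prop := fun v => v = vo ∨ ∃ L, IsResidPath N f vo v L with hReach
  have hclosed : ∀ d, StepOk N f d → Reach (stepTail N d) → Reach (stepHead N d) := by
    intro d hok hr
    right
    rcases hr with h | ⟨L, hLok, hLch, hLh, hLl⟩
    · exact ⟨[d], by simpa using hok, List.isChain_singleton _, by simp [h], by simp⟩
    · have hLne : L ≠ [] := by
        intro h0; rw [h0] at hLh; simp at hLh
      refine ⟨L ++ [d], ?_, ?_, ?_, ?_⟩
      · intro x hx
        rcases List.mem_append.1 hx with h | h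
        · exact hLok x h
        · simp at h; subst h; exact hok
      · show List.IsChain _ (L ++ [d]); rw [List.isChain_append]
        refine ⟨hLch, List.isChain_singleton _, ?_⟩
        intro x hx y hy
        simp at hy; subst hy
        have : L.getLast?.map (stepHead N) = some (stepTail N d) := hLl
        rw [hx] at this; simpa using this
      · rw [List.head?_append_of_ne_nil _ hLne]; exact hLh
      · simp
  let S : Finset V := univ.filter Reach
  have hvoS : vo ∈ S := by simp [S, hReach]
  have hvcS : vc ∉ S := by
    simp only [S, mem_filter, mem_univ, true_and]
    rintro (h | h)
    · exact hne h.symm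
    · exact hnopath h
  -- crossing edges are saturated / at lower bound
  have hsat : ∀ e, N.src e ∈ S → N.dst e ∉ S → g e ≤ f e := by
    intro e hs hd
    have hok : ¬ StepOk N f (Sum.inl e) := by
      intro hok
      apply hd
      have := hclosed (Sum.inl e) hok (by simpa [stepTail, S, mem_filter] using hs)
      simpa [stepHead, S, mem_filter] using this
    have hle : N.cap e ≤ (f e : WithTop ℝ) := not_lt.1 (by simpa [StepOk] using hok)
    have := (hgcap e).2.trans hle
    exact_mod_cast this
  have hlow : ∀ e, N.dst e ∈ S → N.src e ∉ S → f e ≤ g e := by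
    intro e hd hs
    have hok : ¬ StepOk N f (Sum.inr e) := by
      intro hok
      apply hs
      have := hclosed (Sum.inr e) hok (by simpa [stepTail, S, mem_filter] using hd)
      simpa [stepHead, S, mem_filter] using this
    have : f e ≤ N.low e := not_lt.1 (by simpa [StepOk] using hok)
    exact this.trans (hgcap e).1
  -- sum identities
  have hout : ∀ h : E → ℝ, ∑ v ∈ S, outflow N h v = ∑ e, if N.src e ∈ S then h e else 0 := by
    intro h
    unfold outflow
    rw [Finset.sum_comm]
    exact Finset.sum_congr rfl fun e _ => Finset.sum_ite_eq S (N.src e) (fun _ => h e)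
  have hin : ∀ h : E → ℝ, ∑ v ∈ S, inflow N h v = ∑ e, if N.dst e ∈ S then h e else 0 := by
    intro h
    unfold inflow
    rw [Finset.sum_comm]
    exact Finset.sum_congr rfl fun e _ => Finset.sum_ite_eq S (N.dst e) (fun _ => h e)
  set φ : (E → ℝ) → E → ℝ := fun h e =>
    (if N.src e ∈ S then h e else 0) - (if N.dst e ∈ S then h e else 0) with hφ
  have hcross : ∀ e, φ g e ≤ φ f e := by
    intro e
    by_cases hs : N.src e ∈ S <;> by_cases hd : N.dst e ∈ S <;>
      simp only [hφ, hs, hd, if_pos, if_neg, if_true, if_false, sub_zero, zero_sub, sub_self]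
    · exact le_refl 0
    · exact hsat e hs hd
    · exact neg_le_neg (hlow e hd hs)
    · exact le_refl 0
  have key : ∀ h : E → ℝ,
      ∑ v ∈ S, (outflow N h v - inflow N h v) = ∑ e, φ h e := by
    intro h
    rw [Finset.sum_sub_distrib, hout h, hin h, hφ, ← Finset.sum_sub_distrib]
  -- for g: balance
  have hg : ∑ e, φ g e = ∑ v ∈ S, N.bal v := by
    rw [← key g]; exact Finset.sum_congr rfl fun v _ => hgbal v
  -- for f: excess
  have hexc : ∑ v ∈ S, excess N f v = excess N f vo := by
    rw [Finset.sum_eq_single vo]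
    · intro v hv hvne
      have hvc : v ≠ vc := fun h => hvcS (h ▸ hv)
      exact hrest v hvne hvc
    · intro h; exact absurd hvoS h
  have hf : ∑ e, φ f e = ∑ v ∈ S, N.bal v - excess N f vo := by
    have : ∑ v ∈ S, excess N f v
        = ∑ v ∈ S, N.bal v - ∑ v ∈ S, (outflow N f v - inflow N f v) := by
      unfold excess
      rw [Finset.sum_sub_distrib, Finset.sum_add_distrib, Finset.sum_sub_distrib]
      ring
    rw [← key f, hexc] at *
    linarith
  have : ∑ e, φ g e ≤ ∑ e, φ f e := Finset.sum_le_sum fun e _ => hcross e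
  rw [hg, hf] at this
  linarith
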